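/- For any positive semidefinite matrix Q (a possibly singular precision matrix), there exists a permutation matrix P, a strictly lower triangular matrix B, and a diagonal matrix F with non-negative diagonal entries such that P Q Pᵀ = (I - B)ᵀ F (I - B). -/

import Mathlib

open Matrix

private lemma psd_col_zero {k : ℕ} (Q : Matrix (Fin k) (Fin k) ℝ) (hQ : Q.PosSemidef)
    (i : Fin k) (h : Q i i = 0) : ∀ j, Q j i = 0 := by
  have h0 : star (Pi.single i (1:ℝ)) ⬝ᵥ Q *ᵥ (Pi.single i 1) = 0 := by
    simp [mulVec_single, dotProduct, Pi.single_apply, h]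
  have := (hQ.dotProduct_mulVec_zero_iff (Pi.single i 1)).mp h0
  intro j
  have := congrFun this j
  simpa [mulVec_single] using this

private lemma ldl_exists : ∀ (k : ℕ) (Q : Matrix (Fin k) (Fin k) ℝ), Q.PosSemidef →
    ∃ (B : Matrix (Fin k) (Fin k) ℝ) (d : Fin k → ℝ),
      (∀ i j : Fin k, i ≤ j → B i j = 0) ∧ (∀ i, 0 ≤ d i) ∧
      Q = (1 - B)ᵀ * Matrix.diagonal d * (1 - B) := by
  intro k
  induction k with
  | zero =>
      intro Q hQ
      exact ⟨0, 0, fun i => i.elim0, fun i => i.elim0, by ext i; exact i.elim0⟩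
  | succ n ih =>
      intro Q hQ
      set f : ℝ := Q (Fin.last n) (Fin.last n) with hfdef
      have hsymm : ∀ i j, Q i j = Q j i := fun i j => by
        have := congrFun (congrFun hQ.1 i) j
        simpa [conjTranspose_apply] using this.symm
      have hf : 0 ≤ f := by
        have := hQ.dotProduct_mulVec_nonneg (Pi.single (Fin.last n) 1)
        simpa [mulVec_single, dotProduct, Pi.single_apply] using this
      set v : Fin (n+1) → ℝ := fun i => if f = 0 then 0 else Q i (Fin.last n) / f with hv
      have hq : ∀ i, Q i (Fin.last n) = f * v i := by
        intro i
        by_cases h : f = 0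
        · simp [hv, h, psd_col_zero Q hQ (Fin.last n) h i]
        · simp only [hv, h, if_false]
          field_simp
      set Q' : Matrix (Fin n) (Fin n) ℝ :=
        fun i j => Q i.castSucc j.castSucc - f * v i.castSucc * v j.castSucc with hQ'def
      have hvl : f * v (Fin.last n) = f := by rw [← hq (Fin.last n)]
      -- key quadratic form identity
      have key : ∀ (x : Fin n → ℝ) (t : ℝ),
          (Fin.snoc x t : Fin (n+1) → ℝ) ⬝ᵥ Q *ᵥ (Fin.snoc x t) =
            x ⬝ᵥ Q' *ᵥ x + f * ((∑ i, x i * v i.castSucc) + t)^2 := by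
        intro x t
        set s : ℝ := ∑ i, x i * v i.castSucc with hs
        have expand : ∀ i : Fin (n+1), (Q *ᵥ (Fin.snoc x t)) i =
            (∑ j, Q i j.castSucc * x j) + f * v i * t := by
          intro i
          simp [mulVec, dotProduct, Fin.sum_univ_castSucc, hq i]
        rw [dotProduct, Fin.sum_univ_castSucc]
        simp only [expand, Fin.snoc_castSucc, Fin.snoc_last]
        have h1 : ∑ i : Fin n, x i * ((∑ j, Q i.castSucc j.castSucc * x j) + f * v i.castSucc * t)
            = (∑ i : Fin n, x i * ∑ j, Q i.castSucc j.castSucc * x j) + f * s * t := by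
          rw [hs, Finset.mul_sum, Finset.sum_mul, ← Finset.sum_add_distrib]
          exact Finset.sum_congr rfl fun i _ => by ring
        have h2 : (∑ j : Fin n, Q (Fin.last n) j.castSucc * x j) = f * s := by
          rw [hs, Finset.mul_sum]
          exact Finset.sum_congr rfl fun j _ => by rw [hsymm (Fin.last n) j.castSucc, hq]; ring
        rw [h1, h2]
        have h3 : x ⬝ᵥ Q' *ᵥ x =
            (∑ i : Fin n, x i * ∑ j, Q i.castSucc j.castSucc * x j) - f * s * s := by
          simp only [dotProduct, mulVec, hQ'def]
          rw [hs, Finset.mul_sum, ← Finset.sum_sub_distrib]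
          refine Finset.sum_congr rfl fun i _ => ?_
          rw [Finset.mul_sum, Finset.mul_sum, Finset.mul_sum, Finset.sum_mul,
            ← Finset.sum_sub_distrib]
          refine Finset.sum_congr rfl fun j _ => by ring
        rw [h3, hvl]
        ring
      have hQ' : Q'.PosSemidef := by
        refine Matrix.PosSemidef.of_dotProduct_mulVec_nonneg ?_ ?_
        · ext i j
          rw [conjTranspose_apply]
          simp only [hQ'def, star_trivial]
          rw [hsymm j.castSucc i.castSucc]
          ring
        · intro x
          have := hQ.dotProduct_mulVec_nonneg (Fin.snoc x (-(∑ i, x i * v i.castSucc)))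
          rw [show star (Fin.snoc x (-(∑ i, x i * v i.castSucc)) : Fin (n+1) → ℝ) =
            Fin.snoc x (-(∑ i, x i * v i.castSucc)) from rfl, key] at this
          simpa using this
      obtain ⟨B', d', hB', hd', hEq'⟩ := ih Q' hQ'
      set B : Matrix (Fin (n+1)) (Fin (n+1)) ℝ :=
        fun i => Fin.lastCases (fun j => Fin.lastCases 0 (fun j' => -v j'.castSucc) j)
          (fun i' j => Fin.lastCases 0 (fun j' => B' i' j') j) i with hB
      set d : Fin (n+1) → ℝ := Fin.snoc d' f with hd
      have hB1 : ∀ i' j' : Fin n, B i'.castSucc j'.castSucc = B' i' j' := by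
        intro i' j'; simp [hB]
      have hB2 : ∀ i' : Fin n, B i'.castSucc (Fin.last n) = 0 := by
        intro i'; simp [hB]
      have hB3 : ∀ j' : Fin n, B (Fin.last n) j'.castSucc = -v j'.castSucc := by
        intro j'; simp [hB]
      have hB4 : B (Fin.last n) (Fin.last n) = 0 := by simp [hB]
      have hd1 : ∀ i' : Fin n, d i'.castSucc = d' i' := by intro i'; simp [hd]
      have hd2 : d (Fin.last n) = f := by simp [hd]
      have e1 : ∀ (a i' : Fin n), (1 - B) a.castSucc i'.castSucc = (1 - B') a i' := by
        intro a i'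
        simp [Matrix.sub_apply, hB1, Matrix.one_apply, Fin.castSucc_inj]
      have e2 : ∀ a : Fin n, (1 - B) a.castSucc (Fin.last n) = 0 := by
        intro a
        simp [Matrix.sub_apply, hB2, Matrix.one_apply, (Fin.castSucc_lt_last a).ne]
      have e3 : ∀ j' : Fin n, (1 - B) (Fin.last n) j'.castSucc = v j'.castSucc := by
        intro j'
        simp [Matrix.sub_apply, hB3, Matrix.one_apply, (Fin.castSucc_lt_last j').ne']
      have e4 : (1 - B) (Fin.last n) (Fin.last n) = 1 := by
        simp [Matrix.sub_apply, hB4, Matrix.one_apply]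
      have entry : ∀ (M : Matrix (Fin (n+1)) (Fin (n+1)) ℝ) (e : Fin (n+1) → ℝ) (i j : Fin (n+1)),
          (Mᵀ * Matrix.diagonal e * M) i j = ∑ a, e a * M a i * M a j := by
        intro M e i j
        rw [Matrix.mul_assoc, Matrix.mul_apply]
        refine Finset.sum_congr rfl fun a _ => ?_
        rw [Matrix.mul_apply, Finset.mul_sum]
        rw [Finset.sum_eq_single a]
        · rw [Matrix.transpose_apply, Matrix.diagonal_apply_eq]; ring
        · intro b _ hb
          rw [Matrix.diagonal_apply_ne _ (Ne.symm hb)]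
          ring
        · intro h; exact absurd (Finset.mem_univ a) h
      have entry' : ∀ (M : Matrix (Fin n) (Fin n) ℝ) (e : Fin n → ℝ) (i j : Fin n),
          (Mᵀ * Matrix.diagonal e * M) i j = ∑ a, e a * M a i * M a j := by
        intro M e i j
        rw [Matrix.mul_assoc, Matrix.mul_apply]
        refine Finset.sum_congr rfl fun a _ => ?_
        rw [Matrix.mul_apply, Finset.mul_sum]
        rw [Finset.sum_eq_single a]
        · rw [Matrix.transpose_apply, Matrix.diagonal_apply_eq]; ring
        · intro b _ hb
          rw [Matrix.diagonal_apply_ne _ (Ne.symm hb)]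
          ring
        · intro h; exact absurd (Finset.mem_univ a) h
      have hQ'entry : ∀ i' j' : Fin n, Q' i' j' = ∑ a, d' a * (1 - B') a i' * (1 - B') a j' := by
        intro i' j'
        rw [hEq']
        exact entry' (1 - B') d' i' j'
      refine ⟨B, d, ?_, ?_, ?_⟩
      · intro i j hij
        by_cases hi : i = Fin.last n
        · have hj : j = Fin.last n := le_antisymm (Fin.le_last j) (hi ▸ hij)
          rw [hi, hj, hB4]
        · by_cases hj : j = Fin.last n
          · rw [← Fin.castSucc_castPred i hi, hj, hB2]
          · rw [← Fin.castSucc_castPred i hi, ← Fin.castSucc_castPred j hj, hB1]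
            refine hB' _ _ ?_
            have h := hij
            rw [← Fin.castSucc_castPred i hi, ← Fin.castSucc_castPred j hj] at h
            exact Fin.castSucc_le_castSucc_iff.mp h
      · intro i
        refine Fin.lastCases ?_ (fun i' => ?_) i
        · rw [hd2]; exact hf
        · rw [hd1]; exact hd' i'
      · ext i j
        rw [entry (1 - B) d i j, Fin.sum_univ_castSucc]
        refine Fin.lastCases ?_ (fun i' => ?_) i <;> refine Fin.lastCases ?_ (fun j' => ?_) j
        · -- i = last, j = last
          simp only [e4, e2, hd1, hd2]
          simp
          exact hfdef.symm
        · -- i = last, j = cast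
          simp only [e4, e2, e3, hd1, hd2]
          rw [hsymm (Fin.last n) j'.castSucc, hq j'.castSucc]
          simp
        · -- i = cast, j = last
          simp only [e4, e2, e3, hd1, hd2]
          rw [hq i'.castSucc]
          simp
        · -- i = cast, j = cast
          simp only [e1, e2, e3, e4, hd1, hd2]
          rw [← hQ'entry i' j']
          simp only [hQ'def]
          ring

/-- For any positive semidefinite real matrix `Q` there exist a permutation matrix `P`,
a strictly lower triangular matrix `B` and a diagonal matrix `F` with non-negative diagonal
entries such that `P Q Pᵀ = (I - B)ᵀ F (I - B)`. -/
theorem dagar_intrinsic_cholesky {k : ℕ} (Q : Matrix (Fin k) (Fin k) ℝ)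
    (hQ : Q.PosSemidef) :
    ∃ (σ : Equiv.Perm (Fin k)) (B F : Matrix (Fin k) (Fin k) ℝ),
      (∀ i j : Fin k, i ≤ j → B i j = 0) ∧
      (∀ i j : Fin k, i ≠ j → F i j = 0) ∧
      (∀ i : Fin k, 0 ≤ F i i) ∧
      (σ.permMatrix ℝ) * Q * (σ.permMatrix ℝ)ᵀ = (1 - B)ᵀ * F * (1 - B) := by
  obtain ⟨B, d, hB, hd, hEq⟩ := ldl_exists k Q hQ
  refine ⟨1, B, Matrix.diagonal d, hB, fun i j hij => Matrix.diagonal_apply_ne d hij,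
    fun i => by simpa using hd i, ?_⟩
  have hperm : ((1 : Equiv.Perm (Fin k)).permMatrix ℝ) = 1 := by
    ext i j
    simp [Equiv.Perm.permMatrix, PEquiv.toMatrix, Equiv.toPEquiv, Matrix.one_apply, eq_comm]
  rw [hperm, Matrix.one_mul, Matrix.transpose_one, Matrix.mul_one, ← hEq]
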